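/- Let k > 0, μ₁ > 0, μ₂ > 0, and let E be a real number satisfying the threshold condition E ≥ (1/2)[η + η⁻¹ + |η − η⁻¹|(1 + (2/k²)√(μ₁μ₂))], where η = √(μ₂/μ₁). Then the maximum of the function (α₁, α₂) ↦ (μ₁ + k²α₁)(μ₂ + k²α₂) over the set {(α₁, α₂) : α₁ > 0, α₂ > 0, α₁ + α₂ ≤ E, α₁α₂ ≥ 1/4} equals ((k²E + μ₁ + μ₂)/2)², and it is attained at α₁⁰ = E/2 + (μ₂ − μ₁)/(2k²), α₂⁰ = E/2 − (μ₂ − μ₁)/(2k²). -/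

import Mathlib

set_option maxHeartbeats 1000000

/-- Under the threshold condition
`E ≥ (1/2)[η + η⁻¹ + |η - η⁻¹|(1 + (2/k²)√(μ₁μ₂))]` with `η = √(μ₂/μ₁)`, the maximum of
`(α₁,α₂) ↦ (μ₁ + k²α₁)(μ₂ + k²α₂)` over
`{(α₁,α₂) : α₁ > 0, α₂ > 0, α₁ + α₂ ≤ E, α₁α₂ ≥ 1/4}` equals `((k²E + μ₁ + μ₂)/2)²`,
attained at `α₁⁰ = E/2 + (μ₂ - μ₁)/(2k²)`, `α₂⁰ = E/2 - (μ₂ - μ₁)/(2k²)`. -/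
theorem squeezed_noise_max (k μ₁ μ₂ E η : ℝ)
    (hk : 0 < k) (h1 : 0 < μ₁) (h2 : 0 < μ₂)
    (hη : η = Real.sqrt (μ₂ / μ₁))
    (hE : (1/2) * (η + η⁻¹ + |η - η⁻¹| * (1 + (2 / k^2) * Real.sqrt (μ₁ * μ₂))) ≤ E) :
    (0 < E/2 + (μ₂ - μ₁)/(2*k^2) ∧ 0 < E/2 - (μ₂ - μ₁)/(2*k^2) ∧
      (E/2 + (μ₂ - μ₁)/(2*k^2)) + (E/2 - (μ₂ - μ₁)/(2*k^2)) ≤ E ∧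
      (1:ℝ)/4 ≤ (E/2 + (μ₂ - μ₁)/(2*k^2)) * (E/2 - (μ₂ - μ₁)/(2*k^2))) ∧
    (μ₁ + k^2 * (E/2 + (μ₂ - μ₁)/(2*k^2))) * (μ₂ + k^2 * (E/2 - (μ₂ - μ₁)/(2*k^2))) =
      ((k^2 * E + μ₁ + μ₂)/2)^2 ∧
    (∀ α₁ α₂ : ℝ, 0 < α₁ → 0 < α₂ → α₁ + α₂ ≤ E → (1:ℝ)/4 ≤ α₁ * α₂ →
      (μ₁ + k^2 * α₁) * (μ₂ + k^2 * α₂) ≤ ((k^2 * E + μ₁ + μ₂)/2)^2) := by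
  have hk2 : (0:ℝ) < k^2 := by positivity
  set a := Real.sqrt μ₁ with ha
  set b := Real.sqrt μ₂ with hb
  have hap : 0 < a := Real.sqrt_pos.mpr h1
  have hbp : 0 < b := Real.sqrt_pos.mpr h2
  have ha2 : a^2 = μ₁ := Real.sq_sqrt h1.le
  have hb2 : b^2 = μ₂ := Real.sq_sqrt h2.le
  have hab : Real.sqrt (μ₁ * μ₂) = a * b := Real.sqrt_mul h1.le μ₂
  have hη' : η = b / a := by rw [hη, Real.sqrt_div h2.le]
  rw [hη', inv_div, hab] at hE
  have habs : |b / a - a / b| = |μ₂ - μ₁| / (a * b) := by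
    have : b / a - a / b = (μ₂ - μ₁) / (a * b) := by
      field_simp
      nlinarith [ha2, hb2]
    rw [this, abs_div, abs_of_pos (mul_pos hap hbp)]
  rw [habs] at hE
  have hcnn : 0 ≤ |μ₂ - μ₁| := abs_nonneg _
  have hkey : |μ₂ - μ₁| + k^2 ≤ E * k^2 := by
    have h2' : b / a + a / b ≥ 2 := by
      rw [ge_iff_le, div_add_div _ _ (ne_of_gt hap) (ne_of_gt hbp),
        le_div_iff₀ (mul_pos hap hbp)]
      nlinarith [sq_nonneg (a - b)]
    have h3 : |μ₂ - μ₁| / (a * b) * (1 + 2 / k^2 * (a * b))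
        ≥ |μ₂ - μ₁| * (2 / k^2) := by
      have : |μ₂ - μ₁| / (a * b) * (1 + 2 / k^2 * (a * b))
          = |μ₂ - μ₁| / (a * b) + |μ₂ - μ₁| * (2 / k^2) := by
        field_simp
      rw [this]
      nlinarith [div_nonneg hcnn (mul_pos hap hbp).le]
    have hEk : 1 + |μ₂ - μ₁| / k^2 ≤ E := by
      have : |μ₂ - μ₁| * (2 / k^2) = 2 * (|μ₂ - μ₁| / k^2) := by ring
      nlinarith [hE, h2', h3]
    have := mul_le_mul_of_nonneg_right hEk hk2.le
    calc |μ₂ - μ₁| + k^2 = (1 + |μ₂ - μ₁| / k^2) * k^2 := by field_simp; ring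
      _ ≤ E * k^2 := this
  have hΔ1 : μ₂ - μ₁ ≤ |μ₂ - μ₁| := le_abs_self _
  have hΔ2 : -(μ₂ - μ₁) ≤ |μ₂ - μ₁| := neg_le_of_neg_le (neg_abs_le _)
  have h2k : (0:ℝ) < 2 * k^2 := by positivity
  clear hE habs hab hη' hη
  clear_value a b
  clear ha hb ha2 hb2 hap hbp a b
  refine ⟨⟨?_, ?_, by ring_nf; exact le_rfl, ?_⟩, ?_, ?_⟩
  · have heq : E/2 + (μ₂ - μ₁)/(2*k^2) = (E * k^2 + (μ₂ - μ₁)) / (2*k^2) := by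
      field_simp
    rw [heq]
    apply div_pos _ h2k
    linarith
  · have heq : E/2 - (μ₂ - μ₁)/(2*k^2) = (E * k^2 - (μ₂ - μ₁)) / (2*k^2) := by
      field_simp
    rw [heq]
    apply div_pos _ h2k
    linarith
  · have heq : (E/2 + (μ₂ - μ₁)/(2*k^2)) * (E/2 - (μ₂ - μ₁)/(2*k^2))
        = (E^2 * k^4 - (μ₂ - μ₁)^2) / (4 * k^4) := by
      field_simp; ring
    rw [heq, le_div_iff₀ (by positivity)]
    have hsq : (|μ₂ - μ₁| + k^2) * (|μ₂ - μ₁| + k^2) ≤ (E * k^2) * (E * k^2) :=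
      mul_self_le_mul_self (by positivity) hkey
    nlinarith [hsq, sq_abs (μ₂ - μ₁), mul_nonneg hcnn hk2.le]
  · field_simp; ring
  · intro α₁ α₂ hα₁ hα₂ hsum _
    have hS : μ₁ + k^2*α₁ + (μ₂ + k^2*α₂) ≤ k^2 * E + μ₁ + μ₂ := by nlinarith
    have hSpos : 0 < μ₁ + k^2*α₁ + (μ₂ + k^2*α₂) := by positivity
    nlinarith [sq_nonneg (μ₁ + k^2*α₁ - (μ₂ + k^2*α₂)),
      mul_self_le_mul_self hSpos.le hS]
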